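/- Fix n ≥ 1 and strategies (σ,μ,τ), and let T be uniformly distributed on {1,…,n} and independent of (U^n,M_1,M_2,V^n) ~ P^{σμτ}. Define U = U_T, W_1 = (M_1,T), W_2 = (M_2,T), V = V_T. Then the induced joint distribution P^{σμτ}_{U W_1 W_2 V} has marginal on 𝒰 equal to P_U, and satisfies the two Markov chain properties U –∘– W_1 –∘– W_2 and W_1 –∘– W_2 –∘– V; that is, for all points where the conditionals are defined, P(w_2 | u, w_1) = P(w_2 | w_1) and P(v | w_1, w_2) = P(v | w_2). -/
import Mathlib


/-!
Strategic communication via a cascade multiple-description network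
(Bou Rouphael & Le Treust).

STATEMENT 6: marginal and Markov chain properties of the induced single-letter law.
-/

open Finset Filter

/-- A probability distribution on a finite alphabet. -/
structure FDist (α : Type) [Fintype α] where
  p : α → ℝ
  nonneg : ∀ a, 0 ≤ p a
  sum_one : ∑ a, p a = 1

/-- The message alphabet `{1, …, 2^⌊nR⌋}`. -/
abbrev Msg (n : ℕ) (R : ℝ) : Type := Fin (2 ^ ⌊(n : ℝ) * R⌋₊)

section NLetter

variable {U V : Type} [Fintype U] [Fintype V]

/-- The joint law `P^{σμτ}(uⁿ, m₁, m₂, vⁿ)` induced by the source and the strategies. -/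
noncomputable def jointN {n : ℕ} {R1 R2 : ℝ} (PU : FDist U)
    (σ : (Fin n → U) → FDist (Msg n R1))
    (μ : Msg n R1 → FDist (Msg n R2))
    (τ : Msg n R2 → FDist (Fin n → V))
    (un : Fin n → U) (m1 : Msg n R1) (m2 : Msg n R2) (vn : Fin n → V) : ℝ :=
  (∏ t, PU.p (un t)) * (σ un).p m1 * (μ m1).p m2 * (τ m2).p vn

/-- The long-run cost `cⁿ(σ,μ,τ) = E[(1/n) ∑_t c(U_t, V_t)]`. -/
noncomputable def costN {n : ℕ} {R1 R2 : ℝ} (PU : FDist U)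
    (σ : (Fin n → U) → FDist (Msg n R1))
    (μ : Msg n R1 → FDist (Msg n R2))
    (τ : Msg n R2 → FDist (Fin n → V))
    (c : U → V → ℝ) : ℝ :=
  ∑ un : Fin n → U, ∑ m1 : Msg n R1, ∑ m2 : Msg n R2, ∑ vn : Fin n → V,
    jointN PU σ μ τ un m1 m2 vn * ((n : ℝ)⁻¹ * ∑ t, c (un t) (vn t))

/-- Best-response set `𝔸₃(σ,μ)` of the decoder. -/
noncomputable def A3 {n : ℕ} {R1 R2 : ℝ} (PU : FDist U) (c3 : U → V → ℝ)
    (σ : (Fin n → U) → FDist (Msg n R1))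
    (μ : Msg n R1 → FDist (Msg n R2)) :
    Set (Msg n R2 → FDist (Fin n → V)) :=
  {τ | ∀ τ', costN PU σ μ τ c3 ≤ costN PU σ μ τ' c3}

/-- Best-response set `𝔸₂(σ)` of the relay (pairs `(μ,τ)` with `τ ∈ 𝔸₃(σ,μ)`
minimizing the relay cost). -/
noncomputable def A2 {n : ℕ} {R1 R2 : ℝ} (PU : FDist U) (c2 c3 : U → V → ℝ)
    (σ : (Fin n → U) → FDist (Msg n R1)) :
    Set ((Msg n R1 → FDist (Msg n R2)) × (Msg n R2 → FDist (Fin n → V))) :=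
  {mt | mt.2 ∈ A3 PU c3 σ mt.1 ∧
    ∀ mt' : (Msg n R1 → FDist (Msg n R2)) × (Msg n R2 → FDist (Fin n → V)),
      mt'.2 ∈ A3 PU c3 σ mt'.1 →
        costN PU σ mt.1 mt.2 c2 ≤ costN PU σ mt'.1 mt'.2 c2}

/-- The encoder's n-letter optimal cost
`Γₑⁿ(R₁,R₂) = inf_σ max_{(μ,τ) ∈ 𝔸₂(σ)} c₁ⁿ(σ,μ,τ)`. -/
noncomputable def GammaN (PU : FDist U) (c1 c2 c3 : U → V → ℝ)
    (n : ℕ) (R1 R2 : ℝ) : ℝ :=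
  sInf {x | ∃ σ : (Fin n → U) → FDist (Msg n R1),
    x = sSup ((fun mt => costN PU σ mt.1 mt.2 c1) '' A2 (R2 := R2) PU c2 c3 σ)}

end NLetter


section SingleLetterization

variable {U V : Type} [Fintype U] [DecidableEq U] [Fintype V] [DecidableEq V]
variable {n : ℕ} {R1 R2 : ℝ}

/-- The induced single-letter joint law `P^{σμτ}_{U W₁ W₂ V}` of
`U = U_T`, `W₁ = (M₁,T)`, `W₂ = (M₂,T)`, `V = V_T`, where `T` is uniform on
`{1,…,n}` and independent of `(Uⁿ,M₁,M₂,Vⁿ) ∼ P^{σμτ}`. -/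
noncomputable def jointSL (PU : FDist U)
    (σ : (Fin n → U) → FDist (Msg n R1))
    (μ : Msg n R1 → FDist (Msg n R2))
    (τ : Msg n R2 → FDist (Fin n → V))
    (u : U) (w1 : Msg n R1 × Fin n) (w2 : Msg n R2 × Fin n) (v : V) : ℝ :=
  ∑ un : Fin n → U, ∑ vn : Fin n → V,
    if w2.2 = w1.2 ∧ un w1.2 = u ∧ vn w1.2 = v
    then (n : ℝ)⁻¹ * jointN PU σ μ τ un w1.1 w2.1 vn else 0

variable (PU : FDist U)
    (σ : (Fin n → U) → FDist (Msg n R1))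
    (μ : Msg n R1 → FDist (Msg n R2))
    (τ : Msg n R2 → FDist (Fin n → V))

/-- Marginal of `P^{σμτ}_{U W₁ W₂ V}` on `U`. -/
noncomputable def margU (u : U) : ℝ :=
  ∑ w1, ∑ w2, ∑ v, jointSL PU σ μ τ u w1 w2 v

/-- Marginal of `P^{σμτ}_{U W₁ W₂ V}` on `W₁`. -/
noncomputable def margW1 (w1 : Msg n R1 × Fin n) : ℝ :=
  ∑ u, ∑ w2, ∑ v, jointSL PU σ μ τ u w1 w2 v

/-- Marginal of `P^{σμτ}_{U W₁ W₂ V}` on `W₂`. -/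
noncomputable def margW2 (w2 : Msg n R2 × Fin n) : ℝ :=
  ∑ u, ∑ w1, ∑ v, jointSL PU σ μ τ u w1 w2 v

/-- Marginal of `P^{σμτ}_{U W₁ W₂ V}` on `(U,W₁)`. -/
noncomputable def margUW1 (u : U) (w1 : Msg n R1 × Fin n) : ℝ :=
  ∑ w2, ∑ v, jointSL PU σ μ τ u w1 w2 v

/-- Marginal of `P^{σμτ}_{U W₁ W₂ V}` on `(W₁,W₂)`. -/
noncomputable def margW1W2 (w1 : Msg n R1 × Fin n) (w2 : Msg n R2 × Fin n) : ℝ :=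
  ∑ u, ∑ v, jointSL PU σ μ τ u w1 w2 v

/-- Marginal of `P^{σμτ}_{U W₁ W₂ V}` on `(W₂,V)`. -/
noncomputable def margW2V (w2 : Msg n R2 × Fin n) (v : V) : ℝ :=
  ∑ u, ∑ w1, jointSL PU σ μ τ u w1 w2 v

/-- Marginal of `P^{σμτ}_{U W₁ W₂ V}` on `(U,W₁,W₂)`. -/
noncomputable def margUW1W2 (u : U) (w1 : Msg n R1 × Fin n)
    (w2 : Msg n R2 × Fin n) : ℝ :=
  ∑ v, jointSL PU σ μ τ u w1 w2 v

/-- Marginal of `P^{σμτ}_{U W₁ W₂ V}` on `(W₁,W₂,V)`. -/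
noncomputable def margW1W2V (w1 : Msg n R1 × Fin n) (w2 : Msg n R2 × Fin n)
    (v : V) : ℝ :=
  ∑ u, jointSL PU σ μ τ u w1 w2 v

end SingleLetterization

section MarkovHelpers

variable {U V : Type} [Fintype U] [DecidableEq U] [Fintype V] [DecidableEq V]
variable {n : ℕ} {R1 R2 : ℝ}
variable (PU : FDist U) (σ : (Fin n → U) → FDist (Msg n R1))
  (μ : Msg n R1 → FDist (Msg n R2)) (τ : Msg n R2 → FDist (Fin n → V))

/-- `P(u, m1 | T = t)` (joint over `u` and `m1` at coordinate `t`). -/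
noncomputable def Afun (u : U) (m1 : Msg n R1) (t : Fin n) : ℝ :=
  ∑ un : Fin n → U, if un t = u then (∏ s, PU.p (un s)) * (σ un).p m1 else 0

/-- `P(v | m2, T = t)`. -/
noncomputable def Bfun (v : V) (m2 : Msg n R2) (t : Fin n) : ℝ :=
  ∑ vn : Fin n → V, if vn t = v then (τ m2).p vn else 0

/-- `P(m1)`. -/
noncomputable def Sfun (m1 : Msg n R1) : ℝ :=
  ∑ un : Fin n → U, (∏ s, PU.p (un s)) * (σ un).p m1

/-- `P(m2)`. -/
noncomputable def Qfun (m2 : Msg n R2) : ℝ :=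
  ∑ m1, Sfun PU σ m1 * (μ m1).p m2

lemma sum_Afun_u (m1 : Msg n R1) (t : Fin n) :
    ∑ u, Afun PU σ u m1 t = Sfun PU σ m1 := by
  unfold Afun Sfun
  rw [Finset.sum_comm]
  refine Finset.sum_congr rfl fun un _ => ?_
  simp

lemma prodMarg (t : Fin n) (u : U) :
    ∑ un : Fin n → U, (if un t = u then ∏ s, PU.p (un s) else 0) = PU.p u := by
  have h1 : ∀ un : Fin n → U,
      (if un t = u then ∏ s, PU.p (un s) else 0)
        = ∏ s, (if s = t then (if un s = u then PU.p (un s) else 0) else PU.p (un s)) := by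
    intro un
    by_cases h : un t = u
    · rw [if_pos h]
      refine Finset.prod_congr rfl fun s _ => ?_
      by_cases hs : s = t
      · subst hs; simp [h]
      · simp [hs]
    · rw [if_neg h]
      rw [eq_comm]
      apply Finset.prod_eq_zero (Finset.mem_univ t)
      simp [h]
  rw [Finset.sum_congr rfl fun un _ => h1 un]
  rw [← Fintype.piFinset_univ, ← Finset.prod_univ_sum
    (fun _ => (Finset.univ : Finset U))
    (fun s a => if s = t then (if a = u then PU.p a else 0) else PU.p a)]
  have h2 : ∀ s : Fin n,
      (∑ a, if s = t then (if a = u then PU.p a else 0) else PU.p a)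
        = if s = t then PU.p u else 1 := by
    intro s
    by_cases hs : s = t
    · simp [hs, Finset.sum_ite_eq' Finset.univ u PU.p]
    · simp [hs, PU.sum_one]
  rw [Finset.prod_congr rfl fun s _ => h2 s, Finset.prod_ite_eq' Finset.univ t
    (fun _ => PU.p u)]
  simp

lemma sum_Afun_m1 (u : U) (t : Fin n) :
    ∑ m1, Afun PU σ u m1 t = PU.p u := by
  unfold Afun
  rw [Finset.sum_comm, ← prodMarg PU t u]
  refine Finset.sum_congr rfl fun un _ => ?_
  by_cases h : un t = u
  · simp [h, ← Finset.mul_sum, (σ un).sum_one]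
  · simp [h]

lemma sum_Bfun (m2 : Msg n R2) (t : Fin n) :
    ∑ v, Bfun τ v m2 t = 1 := by
  unfold Bfun
  rw [Finset.sum_comm]
  calc (∑ vn : Fin n → V, ∑ v, if vn t = v then (τ m2).p vn else 0)
      = ∑ vn : Fin n → V, (τ m2).p vn := by
        refine Finset.sum_congr rfl fun vn _ => ?_
        simp
    _ = 1 := (τ m2).sum_one

lemma jointSL_eq (u : U) (w1 : Msg n R1 × Fin n) (w2 : Msg n R2 × Fin n) (v : V) :
    jointSL PU σ μ τ u w1 w2 v =
      if w2.2 = w1.2 then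
        (n : ℝ)⁻¹ * Afun PU σ u w1.1 w1.2 * (μ w1.1).p w2.1 * Bfun τ v w2.1 w1.2
      else 0 := by
  unfold jointSL jointN Afun Bfun
  by_cases h : w2.2 = w1.2
  · simp only [h, true_and, if_pos]
    have key : ∀ (un : Fin n → U) (vn : Fin n → V),
        (if un w1.2 = u ∧ vn w1.2 = v then
          (n : ℝ)⁻¹ * ((∏ t, PU.p (un t)) * (σ un).p w1.1 * (μ w1.1).p w2.1 * (τ w2.1).p vn)
          else 0)
        = ((n : ℝ)⁻¹ * (μ w1.1).p w2.1) *
          ((if un w1.2 = u then (∏ s, PU.p (un s)) * (σ un).p w1.1 else 0) *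
           (if vn w1.2 = v then (τ w2.1).p vn else 0)) := by
      intro un vn
      by_cases h1 : un w1.2 = u <;> by_cases h2 : vn w1.2 = v <;>
        simp only [h1, h2, true_and, and_true, false_and, and_false, if_true, if_false,
          mul_zero, zero_mul] <;> ring
    rw [Finset.sum_congr rfl fun un _ => Finset.sum_congr rfl fun vn _ => key un vn]
    simp only [← Finset.mul_sum, ← Finset.sum_mul]
    ring
  · simp [h]

lemma sum_ite_const' {α β : Type} [Fintype α] [AddCommMonoid β] (c : Prop) [Decidable c]
    (f : α → β) : (∑ a, if c then f a else 0) = if c then ∑ a, f a else 0 := by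
  split_ifs <;> simp

lemma margUW1W2_eq (u : U) (w1 : Msg n R1 × Fin n) (w2 : Msg n R2 × Fin n) :
    margUW1W2 PU σ μ τ u w1 w2 =
      if w2.2 = w1.2 then (n : ℝ)⁻¹ * Afun PU σ u w1.1 w1.2 * (μ w1.1).p w2.1 else 0 := by
  unfold margUW1W2
  simp only [jointSL_eq, sum_ite_const']
  split_ifs with h
  · rw [← Finset.mul_sum, sum_Bfun, mul_one]
  · rfl

lemma margUW1_eq (u : U) (w1 : Msg n R1 × Fin n) :
    margUW1 PU σ μ τ u w1 = (n : ℝ)⁻¹ * Afun PU σ u w1.1 w1.2 := by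
  have : margUW1 PU σ μ τ u w1 = ∑ w2, margUW1W2 PU σ μ τ u w1 w2 := rfl
  rw [this]
  simp only [margUW1W2_eq]
  rw [Fintype.sum_prod_type_right]
  simp only [sum_ite_const', Finset.sum_ite_eq' Finset.univ w1.2, Finset.mem_univ, if_true]
  rw [← Finset.mul_sum, (μ w1.1).sum_one, mul_one]

lemma margW1W2V_eq (w1 : Msg n R1 × Fin n) (w2 : Msg n R2 × Fin n) (v : V) :
    margW1W2V PU σ μ τ w1 w2 v =
      if w2.2 = w1.2 then
        (n : ℝ)⁻¹ * Sfun PU σ w1.1 * (μ w1.1).p w2.1 * Bfun τ v w2.1 w1.2 else 0 := by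
  unfold margW1W2V
  simp only [jointSL_eq, sum_ite_const']
  split_ifs with h
  · calc (∑ u, (n : ℝ)⁻¹ * Afun PU σ u w1.1 w1.2 * (μ w1.1).p w2.1 * Bfun τ v w2.1 w1.2)
        = ((n : ℝ)⁻¹ * (μ w1.1).p w2.1 * Bfun τ v w2.1 w1.2) * ∑ u, Afun PU σ u w1.1 w1.2 := by
          rw [Finset.mul_sum]; exact Finset.sum_congr rfl fun u _ => by ring
      _ = _ := by rw [sum_Afun_u]; ring
  · rfl

lemma margW1W2_eq (w1 : Msg n R1 × Fin n) (w2 : Msg n R2 × Fin n) :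
    margW1W2 PU σ μ τ w1 w2 =
      if w2.2 = w1.2 then (n : ℝ)⁻¹ * Sfun PU σ w1.1 * (μ w1.1).p w2.1 else 0 := by
  have : margW1W2 PU σ μ τ w1 w2 = ∑ u, margUW1W2 PU σ μ τ u w1 w2 := rfl
  rw [this]
  simp only [margUW1W2_eq, sum_ite_const']
  split_ifs with h
  · calc (∑ u, (n : ℝ)⁻¹ * Afun PU σ u w1.1 w1.2 * (μ w1.1).p w2.1)
        = ((n : ℝ)⁻¹ * (μ w1.1).p w2.1) * ∑ u, Afun PU σ u w1.1 w1.2 := by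
          rw [Finset.mul_sum]; exact Finset.sum_congr rfl fun u _ => by ring
      _ = _ := by rw [sum_Afun_u]; ring
  · rfl

lemma margW1_eq (w1 : Msg n R1 × Fin n) :
    margW1 PU σ μ τ w1 = (n : ℝ)⁻¹ * Sfun PU σ w1.1 := by
  have : margW1 PU σ μ τ w1 = ∑ w2, margW1W2 PU σ μ τ w1 w2 := by
    unfold margW1 margW1W2
    exact Finset.sum_comm
  rw [this]
  simp only [margW1W2_eq]
  rw [Fintype.sum_prod_type_right]
  simp only [sum_ite_const', Finset.sum_ite_eq' Finset.univ w1.2, Finset.mem_univ, if_true]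
  rw [← Finset.mul_sum, (μ w1.1).sum_one, mul_one]

lemma margW2V_eq (w2 : Msg n R2 × Fin n) (v : V) :
    margW2V PU σ μ τ w2 v = (n : ℝ)⁻¹ * Qfun PU σ μ w2.1 * Bfun τ v w2.1 w2.2 := by
  have : margW2V PU σ μ τ w2 v = ∑ w1, margW1W2V PU σ μ τ w1 w2 v := by
    unfold margW2V margW1W2V
    exact Finset.sum_comm
  rw [this]
  simp only [margW1W2V_eq]
  rw [Fintype.sum_prod_type]
  have step : ∀ m1 : Msg n R1,
      (∑ t1 : Fin n, if w2.2 = t1 then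
        (n : ℝ)⁻¹ * Sfun PU σ m1 * (μ m1).p w2.1 * Bfun τ v w2.1 t1 else 0)
      = (n : ℝ)⁻¹ * Sfun PU σ m1 * (μ m1).p w2.1 * Bfun τ v w2.1 w2.2 := by
    intro m1
    rw [Finset.sum_ite_eq Finset.univ w2.2]
    simp
  rw [Finset.sum_congr rfl fun m1 _ => step m1]
  unfold Qfun
  rw [Finset.mul_sum, Finset.sum_mul]
  exact Finset.sum_congr rfl fun m1 _ => by ring

lemma margW2_eq (w2 : Msg n R2 × Fin n) :
    margW2 PU σ μ τ w2 = (n : ℝ)⁻¹ * Qfun PU σ μ w2.1 := by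
  have : margW2 PU σ μ τ w2 = ∑ v, margW2V PU σ μ τ w2 v := by
    unfold margW2 margW2V
    calc (∑ u, ∑ w1, ∑ v', jointSL PU σ μ τ u w1 w2 v')
        = ∑ u, ∑ v', ∑ w1, jointSL PU σ μ τ u w1 w2 v' :=
          Finset.sum_congr rfl fun u _ => Finset.sum_comm
      _ = ∑ v', ∑ u, ∑ w1, jointSL PU σ μ τ u w1 w2 v' := Finset.sum_comm
  rw [this]
  simp only [margW2V_eq]
  rw [← Finset.mul_sum, sum_Bfun, mul_one]

lemma margU_eq (hn : 1 ≤ n) (u : U) : margU PU σ μ τ u = PU.p u := by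
  have h1 : margU PU σ μ τ u = ∑ w1, margUW1 PU σ μ τ u w1 := rfl
  rw [h1]
  simp only [margUW1_eq]
  rw [Fintype.sum_prod_type]
  have step : ∀ m1, (∑ t1 : Fin n, (n : ℝ)⁻¹ * Afun PU σ u m1 t1)
      = ∑ t1 : Fin n, (n : ℝ)⁻¹ * Afun PU σ u m1 t1 := fun _ => rfl
  rw [Finset.sum_comm]
  have step2 : ∀ t1 : Fin n, (∑ m1, (n : ℝ)⁻¹ * Afun PU σ u m1 t1) = (n : ℝ)⁻¹ * PU.p u := by
    intro t1
    rw [← Finset.mul_sum, sum_Afun_m1]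
  rw [Finset.sum_congr rfl fun t1 _ => step2 t1, Finset.sum_const, Finset.card_univ,
    Fintype.card_fin, nsmul_eq_mul]
  have hn' : (n : ℝ) ≠ 0 := Nat.cast_ne_zero.2 (by omega)
  field_simp

end MarkovHelpers

/-- **Lemma 1 (decomposition).** For `n ≥ 1` and strategies `(σ,μ,τ)`, with
`U = U_T`, `W₁ = (M₁,T)`, `W₂ = (M₂,T)`, `V = V_T` (`T` uniform on `{1,…,n}`
and independent of `(Uⁿ,M₁,M₂,Vⁿ)`), the induced distribution
`P^{σμτ}_{U W₁ W₂ V}` has marginal `P_U` on `𝒰` and satisfies the Markov chains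
`U –∘– W₁ –∘– W₂` and `W₁ –∘– W₂ –∘– V`: wherever the conditionals are defined,
`P(w₂ | u, w₁) = P(w₂ | w₁)` and `P(v | w₁, w₂) = P(v | w₂)`. -/
theorem cascade_singleletter_markov
    {U V : Type} [Fintype U] [DecidableEq U] [Nonempty U]
    [Fintype V] [DecidableEq V] [Nonempty V]
    {n : ℕ} (hn : 1 ≤ n) {R1 R2 : ℝ} (PU : FDist U)
    (σ : (Fin n → U) → FDist (Msg n R1))
    (μ : Msg n R1 → FDist (Msg n R2))
    (τ : Msg n R2 → FDist (Fin n → V)) :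
    (∀ u, margU PU σ μ τ u = PU.p u) ∧
    (∀ (u : U) (w1 : Msg n R1 × Fin n) (w2 : Msg n R2 × Fin n),
      margUW1 PU σ μ τ u w1 ≠ 0 → margW1 PU σ μ τ w1 ≠ 0 →
        margUW1W2 PU σ μ τ u w1 w2 / margUW1 PU σ μ τ u w1
          = margW1W2 PU σ μ τ w1 w2 / margW1 PU σ μ τ w1) ∧
    (∀ (w1 : Msg n R1 × Fin n) (w2 : Msg n R2 × Fin n) (v : V),
      margW1W2 PU σ μ τ w1 w2 ≠ 0 → margW2 PU σ μ τ w2 ≠ 0 →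
        margW1W2V PU σ μ τ w1 w2 v / margW1W2 PU σ μ τ w1 w2
          = margW2V PU σ μ τ w2 v / margW2 PU σ μ τ w2) := by
  refine ⟨fun u => margU_eq PU σ μ τ hn u, ?_, ?_⟩
  · intro u w1 w2 hU hW
    rw [margUW1_eq] at hU
    rw [margW1_eq] at hW
    rw [margUW1W2_eq, margUW1_eq, margW1W2_eq, margW1_eq]
    by_cases h : w2.2 = w1.2
    · rw [if_pos h, if_pos h, mul_div_cancel_left₀ _ hU, mul_div_cancel_left₀ _ hW]
    · rw [if_neg h, if_neg h, zero_div, zero_div]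
  · intro w1 w2 v h12 h2
    rw [margW1W2_eq] at h12
    rw [margW2_eq] at h2
    rw [margW1W2V_eq, margW1W2_eq, margW2V_eq, margW2_eq]
    by_cases h : w2.2 = w1.2
    · rw [if_pos h, if_pos h]
      rw [if_pos h] at h12
      rw [mul_div_cancel_left₀ _ h12, mul_div_cancel_left₀ _ h2, h]
    · rw [if_neg h] at h12
      exact absurd rfl h12
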